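/- Let μ ≥ 1, ℓ ≥ 0, m ≥ 0 be integers, set M = 2ℓ + 4m + 3 and σ = −(2ℓ + 2m + 2)·k. Then for every pair (κ, λ) ∈ {(0,1), (1,1)} and every integer k with gcd(k, M) = 1, one has H_M( q^σ · f((−1)^κ q^k, (−1)^κ q^{μM−k})^{2ℓ+1} · f((−1)^λ q^{μM+2k}, (−1)^λ q^{μM−2k})^{2m+1} ) = 0. -/

import Mathlib

/-!
Common setup: Ramanujan theta series as formal Laurent series over `ℚ`
(`LaurentSeries ℚ = HahnSeries ℤ ℚ`), and the huffing operator `H_M`.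
-/

noncomputable section

open scoped Classical

namespace ThetaVanish

/-- A subset of `ℤ` that is bounded below is partially well-ordered. -/
theorem isPWO_of_subset_Ici {a : ℤ} {s : Set ℤ} (h : s ⊆ Set.Ici a) : s.IsPWO := by
  have hWF : s.IsWF := by
    rw [Set.isWF_iff_no_descending_seq]
    intro f hf hmem
    have key : ∀ n : ℕ, f n + n ≤ f 0 := by
      intro n
      induction n with
      | zero => simp
      | succ k ih =>
        have h2 : f (k + 1) < f k := hf (Nat.lt_succ_self k)
        push_cast
        push_cast at ih
        omega
    have h1 := key (f 0 - a + 1).toNat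
    have h2 : a ≤ f ((f 0 - a + 1).toNat) := h (hmem _)
    have h3 : a ≤ f 0 := h (hmem 0)
    omega
  exact hWF.isPWO

/-- The coefficient of `q^N` in Ramanujan's theta series `f(ε q^r, ε q^s)`:
the (finite, when `r + s > 0`) sum of `ε^n` over all integers `n` with
`r·n(n+1)/2 + s·n(n-1)/2 = N`. -/
def thetaCoeff (ε r s : ℤ) : ℤ → ℚ := fun N =>
  ∑ᶠ n : ℤ, if r * (n * (n + 1) / 2) + s * (n * (n - 1) / 2) = N then (ε : ℚ) ^ n else 0

theorem thetaCoeff_support (ε r s : ℤ) (h : 0 < r + s) :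
    Function.support (thetaCoeff ε r s) ⊆ Set.Ici (-(r - s) ^ 2) := by
  intro N hN
  simp only [Function.mem_support, ne_eq] at hN
  rw [Set.mem_Ici]
  by_contra hcon
  push_neg at hcon
  apply hN
  apply finsum_eq_zero_of_forall_eq_zero
  intro n
  rw [if_neg]
  intro hQ
  obtain ⟨c, hc⟩ := Int.even_mul_succ_self n
  obtain ⟨e, he⟩ := Int.even_mul_pred_self n
  have hc' : n * (n + 1) = 2 * c := by omega
  have he' : n * (n - 1) = 2 * e := by omega
  have e1 : n * (n + 1) / 2 = c := by omega
  have e2 : n * (n - 1) / 2 = e := by omega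
  rw [e1, e2] at hQ
  have key : 2 * N = (r + s) * n ^ 2 + (r - s) * n := by
    linear_combination -2 * hQ - r * hc' - s * he'
  nlinarith [sq_nonneg (2 * n + r - s), sq_nonneg (r - s),
    mul_nonneg (show (0:ℤ) ≤ r + s - 1 by omega) (sq_nonneg n)]

/-- Ramanujan's theta series `f(ε q^r, ε q^s)` (for a sign `ε ∈ {1, -1}` and
`r + s > 0`), as a formal Laurent series over `ℚ`; junk value `0` if `r + s ≤ 0`. -/
def theta (ε r s : ℤ) : LaurentSeries ℚ :=
  if h : 0 < r + s then
    { coeff := thetaCoeff ε r s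
      isPWO_support' := isPWO_of_subset_Ici (thetaCoeff_support ε r s h) }
  else 0

/-- The huffing operator `H_M`: keep only the coefficients whose index is a
multiple of `M`. -/
def huff (M : ℤ) (G : LaurentSeries ℚ) : LaurentSeries ℚ where
  coeff N := if M ∣ N then G.coeff N else 0
  isPWO_support' := by
    apply Set.IsPWO.mono G.isPWO_support
    intro N hN
    simp only [Function.mem_support, ne_eq] at hN
    rw [HahnSeries.mem_support]
    by_cases hd : M ∣ N
    · rwa [if_pos hd] at hN
    · exact absurd (if_neg hd) hN


section Machinery

open Finset

/-- `G` expands as the (locally finite, bounded-below) sum `∑_{i : ι} c i · q^(e i)`. -/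
structure Expands {ι : Type} (G : LaurentSeries ℚ) (e : ι → ℤ) (c : ι → ℚ) : Prop where
  bdd : ∃ b : ℤ, ∀ i, b ≤ e i
  fin : ∀ N : ℤ, {i | e i = N}.Finite
  coeff_eq : ∀ N : ℤ, G.coeff N = ∑ i ∈ (fin N).toFinset, c i

theorem Expands.of_eq {G : LaurentSeries ℚ} {ι : Type} {e e' : ι → ℤ} {c c' : ι → ℚ}
    (h : Expands G e c) (he : ∀ i, e' i = e i) (hc : ∀ i, c' i = c i) : Expands G e' c' := by
  have h1 : e' = e := funext he
  have h2 : c' = c := funext hc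
  rw [h1, h2]; exact h

theorem expands_single (σ : ℤ) :
    Expands (HahnSeries.single σ (1 : ℚ)) (fun _ : PUnit => σ) (fun _ => 1) := by
  refine ⟨⟨σ, fun _ => le_rfl⟩, fun N => Set.toFinite _, fun N => ?_⟩
  by_cases hN : N = σ
  · subst hN
    rw [HahnSeries.coeff_single_same]
    have hmem : PUnit.unit ∈ (Set.toFinite {i : PUnit | (fun _ => N) i = N}).toFinset := by
      simp
    rw [Finset.eq_singleton_iff_unique_mem.mpr ⟨hmem, fun x _ => Subsingleton.elim x _⟩]
    simp
  · rw [HahnSeries.coeff_single, if_neg hN]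
    have : {i : PUnit | (fun _ => σ) i = N} = ∅ := by
      ext u; simp only [Set.mem_setOf_eq, Set.mem_empty_iff_false, iff_false]
      exact fun h => hN h.symm
    rw [Set.Finite.toFinset_eq_empty.mpr this, Finset.sum_empty]

theorem Expands.mul {G₁ G₂ : LaurentSeries ℚ} {ι₁ ι₂ : Type} {e₁ : ι₁ → ℤ} {c₁ : ι₁ → ℚ}
    {e₂ : ι₂ → ℤ} {c₂ : ι₂ → ℚ} (h₁ : Expands G₁ e₁ c₁) (h₂ : Expands G₂ e₂ c₂) :
    Expands (G₁ * G₂) (fun p : ι₁ × ι₂ => e₁ p.1 + e₂ p.2) (fun p => c₁ p.1 * c₂ p.2) := by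
  classical
  obtain ⟨b₁, hb₁⟩ := h₁.bdd
  obtain ⟨b₂, hb₂⟩ := h₂.bdd
  have hfin : ∀ N : ℤ, {p : ι₁ × ι₂ | e₁ p.1 + e₂ p.2 = N}.Finite := by
    intro N
    apply Set.Finite.subset (Set.Finite.biUnion (Set.finite_Icc b₁ (N - b₂))
      (fun a _ => Set.Finite.prod (h₁.fin a) (h₂.fin (N - a))))
    intro p hp
    simp only [Set.mem_setOf_eq] at hp
    apply Set.mem_biUnion (show e₁ p.1 ∈ Set.Icc b₁ (N - b₂) from
      Set.mem_Icc.mpr ⟨hb₁ _, by have := hb₂ p.2; omega⟩)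
    exact Set.mem_prod.mpr ⟨rfl, by simp only [Set.mem_setOf_eq]; omega⟩
  refine ⟨⟨b₁ + b₂, fun p => add_le_add (hb₁ p.1) (hb₂ p.2)⟩, hfin, fun N => ?_⟩
  have hsupp₁ : ∀ a : ℤ, G₁.coeff a ≠ 0 → b₁ ≤ a := by
    intro a ha
    rw [h₁.coeff_eq] at ha
    obtain ⟨i, hi, -⟩ := Finset.exists_ne_zero_of_sum_ne_zero ha
    rw [Set.Finite.mem_toFinset, Set.mem_setOf_eq] at hi
    exact hi ▸ hb₁ i
  have hsupp₂ : ∀ a : ℤ, G₂.coeff a ≠ 0 → b₂ ≤ a := by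
    intro a ha
    rw [h₂.coeff_eq] at ha
    obtain ⟨i, hi, -⟩ := Finset.exists_ne_zero_of_sum_ne_zero ha
    rw [Set.Finite.mem_toFinset, Set.mem_setOf_eq] at hi
    exact hi ▸ hb₂ i
  rw [HahnSeries.coeff_mul]
  have step1 : ∑ ij ∈ Finset.antidiagonal G₁.isPWO_support G₂.isPWO_support N,
      G₁.coeff ij.1 * G₂.coeff ij.2
      = ∑ a ∈ Finset.Icc b₁ (N - b₂), G₁.coeff a * G₂.coeff (N - a) := by
    rw [← Finset.sum_image (f := fun ij : ℤ × ℤ => G₁.coeff ij.1 * G₂.coeff ij.2)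
      (g := fun a : ℤ => (a, N - a)) (s := Finset.Icc b₁ (N - b₂))
      (fun x _ y _ h => by simpa using (Prod.ext_iff.mp h).1)]
    apply Finset.sum_subset
    · intro ij hij
      rw [Finset.mem_antidiagonal] at hij
      obtain ⟨hij1, hij2, hsum⟩ := hij
      rw [HahnSeries.mem_support] at hij1 hij2
      rw [Finset.mem_image]
      refine ⟨ij.1, Finset.mem_Icc.mpr ⟨hsupp₁ _ hij1, by have := hsupp₂ _ hij2; omega⟩, ?_⟩
      have : N - ij.1 = ij.2 := by omega
      rw [this]
    · intro x hx hnx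
      rw [Finset.mem_image] at hx
      obtain ⟨a, _, rfl⟩ := hx
      rw [Finset.mem_antidiagonal] at hnx
      by_cases hc1 : G₁.coeff a = 0
      · simp [hc1]
      · have : G₂.coeff (N - a) = 0 := by
          by_contra hc2
          exact hnx ⟨HahnSeries.mem_support _ _ |>.mpr hc1,
            HahnSeries.mem_support _ _ |>.mpr hc2, by ring⟩
        simp [this]
  rw [step1]
  have hdisj : (↑(Finset.Icc b₁ (N - b₂)) : Set ℤ).PairwiseDisjoint
      (fun a => (h₁.fin a).toFinset ×ˢ (h₂.fin (N - a)).toFinset) := by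
    intro a _ a' _ hne
    simp only [Function.onFun]
    rw [Finset.disjoint_left]
    intro p hp hp'
    rw [Finset.mem_product, Set.Finite.mem_toFinset, Set.mem_setOf_eq] at hp hp'
    exact hne (hp.1.symm.trans hp'.1)
  have step2 : (hfin N).toFinset
      = (Finset.Icc b₁ (N - b₂)).biUnion
        (fun a => (h₁.fin a).toFinset ×ˢ (h₂.fin (N - a)).toFinset) := by
    ext p
    simp only [Set.Finite.mem_toFinset, Set.mem_setOf_eq, Finset.mem_biUnion, Finset.mem_Icc,
      Finset.mem_product]
    constructor
    · intro hp
      exact ⟨e₁ p.1, ⟨hb₁ p.1, by have := hb₂ p.2; omega⟩, rfl, by omega⟩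
    · rintro ⟨a, -, rfl, h2⟩
      omega
  rw [step2, Finset.sum_biUnion hdisj]
  apply Finset.sum_congr rfl
  intro a _
  rw [h₁.coeff_eq, h₂.coeff_eq, Finset.sum_mul_sum, Finset.sum_product]

theorem Expands.congr {G : LaurentSeries ℚ} {ι₁ ι₂ : Type} {e₁ : ι₁ → ℤ} {c₁ : ι₁ → ℚ}
    (h : Expands G e₁ c₁) (E : ι₂ ≃ ι₁) :
    Expands G (fun i => e₁ (E i)) (fun i => c₁ (E i)) := by
  obtain ⟨b, hb⟩ := h.bdd
  have hfin : ∀ N : ℤ, {i : ι₂ | e₁ (E i) = N}.Finite := by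
    intro N
    have : {i : ι₂ | e₁ (E i) = N} = E ⁻¹' {j | e₁ j = N} := rfl
    rw [this]
    exact Set.Finite.preimage E.injective.injOn (h.fin N)
  refine ⟨⟨b, fun i => hb _⟩, hfin, fun N => ?_⟩
  rw [h.coeff_eq]
  refine Finset.sum_equiv E.symm (fun j => ?_) (fun j _ => by simp)
  simp only [Set.Finite.mem_toFinset, Set.mem_setOf_eq, Equiv.apply_symm_apply]

theorem Expands.pow {G : LaurentSeries ℚ} {ι : Type} {e : ι → ℤ} {c : ι → ℚ}
    (h : Expands G e c) : ∀ p : ℕ,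
    Expands (G ^ p) (fun f : Fin p → ι => ∑ i, e (f i)) (fun f => ∏ i, c (f i))
  | 0 => by
    haveI : Subsingleton (Fin 0 → ι) := ⟨fun a b => funext fun i => i.elim0⟩
    haveI : Finite (Fin 0 → ι) := Finite.of_subsingleton
    refine ⟨⟨0, fun f => by simp⟩, fun N => Set.toFinite _, fun N => ?_⟩
    rw [pow_zero, HahnSeries.coeff_one]
    by_cases hN : N = 0
    · subst hN
      rw [if_pos rfl]
      have hmem : (fun i => i.elim0 : Fin 0 → ι) ∈
          (Set.toFinite {f : Fin 0 → ι | (∑ i, e (f i)) = 0}).toFinset := by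
        rw [Set.Finite.mem_toFinset, Set.mem_setOf_eq, Finset.univ_eq_empty, Finset.sum_empty]
      rw [Finset.eq_singleton_iff_unique_mem.mpr ⟨hmem, fun x _ => Subsingleton.elim x _⟩]
      simp
    · rw [if_neg hN]
      have : {f : Fin 0 → ι | (∑ i, e (f i)) = N} = ∅ := by
        ext f
        simp only [Set.mem_setOf_eq, Set.mem_empty_iff_false, iff_false, Finset.univ_eq_empty,
          Finset.sum_empty]
        exact fun hc => hN hc.symm
      rw [Set.Finite.toFinset_eq_empty.mpr this, Finset.sum_empty]
  | (p + 1) => by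
    have hmul := h.mul (Expands.pow h p)
    rw [pow_succ']
    have hcg := hmul.congr (Fin.consEquiv (fun _ : Fin (p+1) => ι)).symm
    refine hcg.of_eq (fun f => ?_) (fun f => ?_)
    · show (∑ i, e (f i)) = e (((Fin.consEquiv _).symm f).1) + ∑ i, e ((((Fin.consEquiv _).symm f)).2 i)
      rw [Fin.sum_univ_succ]
      rfl
    · show (∏ i, c (f i)) = c (((Fin.consEquiv _).symm f).1) * ∏ i, c ((((Fin.consEquiv _).symm f)).2 i)
      rw [Fin.prod_univ_succ]
      rfl

/-- doubling identity for the exponents appearing in `theta`. -/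
theorem two_mul_exp (r s n : ℤ) :
    2 * (r * (n * (n + 1) / 2) + s * (n * (n - 1) / 2)) = (r + s) * n ^ 2 + (r - s) * n := by
  obtain ⟨c, hc⟩ := Int.even_mul_succ_self n
  obtain ⟨d, hd⟩ := Int.even_mul_pred_self n
  have e1 : n * (n + 1) / 2 = c := by omega
  have e2 : n * (n - 1) / 2 = d := by omega
  rw [e1, e2]
  linear_combination (-r) * hc + (-s) * hd

theorem expands_theta (ε r s : ℤ) (h : 0 < r + s) :
    Expands (theta ε r s) (fun n : ℤ => r * (n * (n + 1) / 2) + s * (n * (n - 1) / 2))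
      (fun n => (ε : ℚ) ^ n) := by
  have hfin : ∀ N : ℤ, {n : ℤ | r * (n * (n + 1) / 2) + s * (n * (n - 1) / 2) = N}.Finite := by
    intro N
    apply Set.Finite.subset (Set.finite_Icc (-(2*|N| + |r - s| + 1)) (2*|N| + |r - s| + 1))
    intro n hn
    simp only [Set.mem_setOf_eq] at hn
    have h2 := two_mul_exp r s n
    rw [hn] at h2
    have habs : |(r-s)*n| ≤ |r - s| * |n| := le_of_eq (abs_mul _ _)
    have h4 : n^2 ≤ 2*|N| + |r - s| * |n| := by
      nlinarith [neg_abs_le ((r-s)*n), le_abs_self N, abs_nonneg N,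
        mul_nonneg (show (0:ℤ) ≤ r+s-1 by omega) (sq_nonneg n)]
    have h5 : |n| ≤ 2*|N| + |r - s| + 1 := by
      by_contra hR
      push_neg at hR
      have h6 : |n| * |n| = n^2 := by rw [← abs_mul, sq, abs_mul_self]
      nlinarith [h6, mul_le_mul_of_nonneg_left (le_of_lt hR) (abs_nonneg n),
        abs_nonneg n, abs_nonneg N, abs_nonneg (r-s)]
    rw [Set.mem_Icc]
    constructor
    · linarith [neg_abs_le n]
    · linarith [le_abs_self n]
  refine ⟨⟨-(r-s)^2, fun n => ?_⟩, hfin, fun N => ?_⟩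
  · have h2 := two_mul_exp r s n
    nlinarith [sq_nonneg (2*n + (r-s)), sq_nonneg (r-s),
      mul_nonneg (show (0:ℤ) ≤ r+s-1 by omega) (sq_nonneg n)]
  · unfold theta
    rw [dif_pos h]
    show thetaCoeff ε r s N = _
    unfold thetaCoeff
    have hind : ∀ n : ℤ, (if r * (n * (n + 1) / 2) + s * (n * (n - 1) / 2) = N
        then (ε:ℚ)^n else 0)
        = Set.indicator {n : ℤ | r * (n*(n+1)/2) + s*(n*(n-1)/2) = N} (fun n => (ε:ℚ)^n) n := by
      intro n
      rw [Set.indicator_apply]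
      simp only [Set.mem_setOf_eq]
    rw [finsum_congr hind, ← finsum_mem_def, finsum_mem_eq_finite_toFinset_sum _ (hfin N)]

end Machinery

theorem huff_coeff (M : ℤ) (G : LaurentSeries ℚ) (N : ℤ) :
    (huff M G).coeff N = if M ∣ N then G.coeff N else 0 := rfl

theorem huff_eq_zero {M : ℤ} {G : LaurentSeries ℚ} (h : ∀ N, M ∣ N → G.coeff N = 0) :
    huff M G = 0 := by
  ext N
  rw [huff_coeff, HahnSeries.coeff_zero]
  by_cases hd : M ∣ N
  · rw [if_pos hd]; exact h N hd
  · rw [if_neg hd]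

/-- **Theorem (Type I.2, eq. (1.8))**: with `M = 2ℓ + 4m + 3` and
`σ = -(2ℓ + 2m + 2)k`, for `(κ, λ) ∈ {(0,1), (1,1)}` and `gcd(k, M) = 1`,
`H_M(q^σ · f((-1)^κ q^k, (-1)^κ q^{μM-k})^{2ℓ+1} ·
  f((-1)^λ q^{μM+2k}, (-1)^λ q^{μM-2k})^{2m+1}) = 0`. -/
theorem statement4 (μ ℓ m k M σ : ℤ) (hμ : 1 ≤ μ) (hℓ : 0 ≤ ℓ) (hm : 0 ≤ m)
    (hM : M = 2 * ℓ + 4 * m + 3) (hσ : σ = -(2 * ℓ + 2 * m + 2) * k)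
    (κ lam : ℕ) (hκlam : (κ = 0 ∧ lam = 1) ∨ (κ = 1 ∧ lam = 1))
    (hk : Int.gcd k M = 1) :
    huff M (HahnSeries.single σ (1 : ℚ)
      * theta ((-1) ^ κ) k (μ * M - k) ^ (2 * ℓ + 1)
      * theta ((-1) ^ lam) (μ * M + 2 * k) (μ * M - 2 * k) ^ (2 * m + 1)) = 0 := by
  have hMpos : 0 < M := by omega
  have hμM : 0 < μ * M := mul_pos (by omega) hMpos
  have hlam1 : lam = 1 := by rcases hκlam with ⟨_, h⟩ | ⟨_, h⟩ <;> exact h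
  have hε1 : ((-1 : ℤ) ^ κ = 1) ∨ ((-1 : ℤ) ^ κ = -1) := by
    rcases hκlam with ⟨h, _⟩ | ⟨h, _⟩ <;> subst h <;> simp
  have hε2 : ((-1 : ℤ) ^ lam) = -1 := by rw [hlam1, pow_one]
  set A' : ℕ := (2 * ℓ + 1).toNat with hA'def
  set B' : ℕ := (2 * m + 1).toNat with hB'def
  have hA : (A' : ℤ) = 2 * ℓ + 1 := Int.toNat_of_nonneg (by omega)
  have hB : (B' : ℤ) = 2 * m + 1 := Int.toNat_of_nonneg (by omega)
  have hB'pos : 0 < B' := by omega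
  rw [show (2 * ℓ + 1 : ℤ) = ((A' : ℕ) : ℤ) from hA.symm,
    show (2 * m + 1 : ℤ) = ((B' : ℕ) : ℤ) from hB.symm, zpow_natCast, zpow_natCast]
  have hpk : 0 < k + (μ * M - k) := by linarith
  have hpk2 : 0 < (μ * M + 2 * k) + (μ * M - 2 * k) := by linarith
  have hexp := ((expands_single σ).mul
      ((expands_theta ((-1) ^ κ) k (μ * M - k) hpk).pow A')).mul
    ((expands_theta ((-1) ^ lam) (μ * M + 2 * k) (μ * M - 2 * k) hpk2).pow B')
  apply huff_eq_zero
  intro N hdvd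
  rw [hexp.coeff_eq N]
  set T := (hexp.fin N).toFinset with hT
  -- abbreviations
  set EE : (PUnit × (Fin A' → ℤ)) × (Fin B' → ℤ) → ℤ := fun q =>
    (σ + ∑ i, (k * ((q.1.2 i) * (q.1.2 i + 1) / 2) + (μ*M - k) * ((q.1.2 i) * (q.1.2 i - 1) / 2)))
    + ∑ j, ((μ*M + 2*k) * ((q.2 j) * (q.2 j + 1) / 2)
        + (μ*M - 2*k) * ((q.2 j) * (q.2 j - 1) / 2)) with hEEdef
  set sv : (PUnit × (Fin A' → ℤ)) × (Fin B' → ℤ) → ℤ := fun q =>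
    (2 * (∑ i, q.1.2 i) + 4 * (∑ j, q.2 j) - (2 * ℓ + 1)) / M with hsvdef
  set Φ : (PUnit × (Fin A' → ℤ)) × (Fin B' → ℤ) → (PUnit × (Fin A' → ℤ)) × (Fin B' → ℤ) :=
    fun q => ((PUnit.unit, fun i => sv q + 1 - q.1.2 i), fun j => sv q - q.2 j) with hΦ
  have Φ0 : ∀ q, (Φ q).1.1 = PUnit.unit := fun q => by rw [hΦ]
  have Φ1 : ∀ q, (Φ q).1.2 = fun i => sv q + 1 - q.1.2 i := fun q => by rw [hΦ]
  have Φ2 : ∀ q, (Φ q).2 = fun j => sv q - q.2 j := fun q => by rw [hΦ]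
  -- membership characterization
  have hmemT : ∀ p, p ∈ T ↔ EE p = N := by
    intro p
    rw [hT, Set.Finite.mem_toFinset, hEEdef]
    exact Iff.rfl
  -- doubled per-sum identities
  have key1 : ∀ n : ℤ, 2 * (k * (n * (n+1) / 2) + (μ*M - k) * (n * (n-1) / 2))
      = μ*M * n^2 + (2*k - μ*M) * n := by
    intro n; rw [two_mul_exp]; ring
  have key2 : ∀ n : ℤ, 2 * ((μ*M + 2*k) * (n * (n+1) / 2) + (μ*M - 2*k) * (n * (n-1) / 2))
      = 2*(μ*M) * n^2 + 4*k * n := by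
    intro n; rw [two_mul_exp]; ring
  have sumkey1 : ∀ v : Fin A' → ℤ,
      2 * (∑ i, (k * ((v i) * (v i + 1) / 2) + (μ*M - k) * ((v i) * (v i - 1) / 2)))
      = μ*M * (∑ i, (v i)^2) + (2*k - μ*M) * (∑ i, v i) := by
    intro v
    rw [Finset.mul_sum, Finset.mul_sum, Finset.mul_sum, ← Finset.sum_add_distrib]
    exact Finset.sum_congr rfl fun i _ => key1 (v i)
  have sumkey2 : ∀ w : Fin B' → ℤ,
      2 * (∑ j, ((μ*M + 2*k) * ((w j) * (w j + 1) / 2) + (μ*M - 2*k) * ((w j) * (w j - 1) / 2)))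
      = 2*(μ*M) * (∑ j, (w j)^2) + 4*k * (∑ j, w j) := by
    intro w
    rw [Finset.mul_sum, Finset.mul_sum, Finset.mul_sum, ← Finset.sum_add_distrib]
    exact Finset.sum_congr rfl fun j _ => key2 (w j)
  have hEE2 : ∀ q, 2 * EE q = 2*σ
      + (μ*M * (∑ i, (q.1.2 i)^2) + (2*k - μ*M) * (∑ i, q.1.2 i))
      + (2*(μ*M) * (∑ j, (q.2 j)^2) + 4*k * (∑ j, q.2 j)) := by
    intro q
    simp only [hEEdef]
    have h1 := sumkey1 q.1.2
    have h2 := sumkey2 q.2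
    linarith
  have sumlin : ∀ {a : ℕ} (v : Fin a → ℤ) (t : ℤ), (∑ i, (t - v i)) = a * t - ∑ i, v i := by
    intro a v t
    rw [Finset.sum_sub_distrib, Finset.sum_const, Finset.card_univ, Fintype.card_fin,
      nsmul_eq_mul]
  have sumsq : ∀ {a : ℕ} (v : Fin a → ℤ) (t : ℤ),
      (∑ i, (t - v i)^2) = a * t^2 - 2*t*(∑ i, v i) + ∑ i, (v i)^2 := by
    intro a v t
    have hpt : ∀ i : Fin a, (t - v i)^2 = (t^2 - 2*t*(v i)) + (v i)^2 := fun i => by ring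
    rw [Finset.sum_congr rfl fun i _ => hpt i, Finset.sum_add_distrib, Finset.sum_sub_distrib,
      Finset.sum_const, Finset.card_univ, Fintype.card_fin, nsmul_eq_mul, ← Finset.mul_sum]
  have hsum1 : ∀ p, (∑ i, (Φ p).1.2 i) = (A' : ℤ) * (sv p + 1) - ∑ i, p.1.2 i := by
    intro p; simp only [Φ1]; exact sumlin p.1.2 (sv p + 1)
  have hsum2 : ∀ p, (∑ j, (Φ p).2 j) = (B' : ℤ) * (sv p) - ∑ j, p.2 j := by
    intro p; simp only [Φ2]; exact sumlin p.2 (sv p)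
  have hsq1 : ∀ p, (∑ i, ((Φ p).1.2 i)^2)
      = (A' : ℤ) * (sv p + 1)^2 - 2*(sv p + 1)*(∑ i, p.1.2 i) + ∑ i, (p.1.2 i)^2 := by
    intro p; simp only [Φ1]; exact sumsq p.1.2 (sv p + 1)
  have hsq2 : ∀ p, (∑ j, ((Φ p).2 j)^2)
      = (B' : ℤ) * (sv p)^2 - 2*(sv p)*(∑ j, p.2 j) + ∑ j, (p.2 j)^2 := by
    intro p; simp only [Φ2]; exact sumsq p.2 (sv p)
  -- the integrality of s, on the fiber
  have master : ∀ p ∈ T, M * sv p = 2*(∑ i, p.1.2 i) + 4*(∑ j, p.2 j) - (2*ℓ+1) := by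
    intro p hp
    have hpE : EE p = N := (hmemT p).mp hp
    have hdub := hEE2 p
    rw [hsvdef]
    apply Int.mul_ediv_cancel'
    obtain ⟨N₀, hN₀⟩ := hdvd
    have hdvd1 : M ∣ 2 * ((∑ i, p.1.2 i) + 2*(∑ j, p.2 j) - (2*ℓ + 2*m + 2)) * k :=
      ⟨2*N₀ - μ*((∑ i, (p.1.2 i)^2) - (∑ i, p.1.2 i) + 2*(∑ j, (p.2 j)^2)), by
        linear_combination -hdub + 2*hpE - 2*hσ + 2*hN₀⟩
    have hcop : IsCoprime (M : ℤ) k := by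
      rw [Int.isCoprime_iff_gcd_eq_one, Int.gcd_comm]
      exact hk
    have hdvd2 : M ∣ 2 * ((∑ i, p.1.2 i) + 2*(∑ j, p.2 j) - (2*ℓ + 2*m + 2)) :=
      hcop.dvd_of_dvd_mul_right hdvd1
    obtain ⟨t, ht⟩ := hdvd2
    have h2Mt : (2:ℤ) ∣ M * t :=
      ⟨(∑ i, p.1.2 i) + 2*(∑ j, p.2 j) - (2*ℓ + 2*m + 2), by linarith⟩
    have h2M : ¬ (2:ℤ) ∣ M := by omega
    rcases (Int.prime_two.dvd_mul).mp h2Mt with h | h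
    · exact absurd h h2M
    obtain ⟨u, hu⟩ := h
    exact ⟨2*u + 1, by linear_combination ht + M * hu - hM⟩
  have hodd : ∀ p ∈ T, Odd (sv p) := by
    intro p hp
    have h1 := master p hp
    have h2 : Odd (M * sv p) := by
      rw [h1]; exact ⟨(∑ i, p.1.2 i) + 2*(∑ j, p.2 j) - ℓ - 1, by ring⟩
    exact (Int.odd_mul.mp h2).2
  have hmemΦ : ∀ p ∈ T, Φ p ∈ T := by
    intro p hp
    have hpE : EE p = N := (hmemT p).mp hp
    have h1 := master p hp
    rw [hmemT]
    have hq := hEE2 (Φ p)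
    rw [hsq1 p, hsum1 p, hsq2 p, hsum2 p, hA, hB] at hq
    have hp2 := hEE2 p
    have h3 : 2 * EE (Φ p) = 2 * N := by
      rw [hq]
      linear_combination -hp2 + 2*hpE + (μ*M*(sv p) + 2*k)*h1 - (μ*M*(sv p)^2 + 2*k*(sv p))*hM
    linarith
  have hsvΦ : ∀ p ∈ T, sv (Φ p) = sv p := by
    intro p hp
    have h1 := master p hp
    have h2 : 2 * (∑ i, (Φ p).1.2 i) + 4 * (∑ j, (Φ p).2 j) - (2*ℓ+1) = M * sv p := by
      rw [hsum1 p, hsum2 p, hA, hB]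
      linear_combination h1 - 2*(sv p)*hM
    have h3 : sv (Φ p) = (2 * (∑ i, (Φ p).1.2 i) + 4 * (∑ j, (Φ p).2 j) - (2*ℓ+1)) / M := by
      rw [hsvdef]
    rw [h3, h2, Int.mul_ediv_cancel_left _ (by omega : M ≠ 0)]
  -- the involution kills the sum
  refine Finset.sum_involution (fun p _ => Φ p) ?_ ?_ ?_ ?_
  · -- signs cancel
    intro p hp
    obtain ⟨w, hw⟩ := hodd p hp
    show (1 * ∏ i, (((-1:ℤ)^κ : ℤ) : ℚ) ^ (p.1.2 i)) * ∏ j, (((-1:ℤ)^lam : ℤ) : ℚ) ^ (p.2 j)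
      + (1 * ∏ i, (((-1:ℤ)^κ : ℤ) : ℚ) ^ ((Φ p).1.2 i))
        * ∏ j, (((-1:ℤ)^lam : ℤ) : ℚ) ^ ((Φ p).2 j) = 0
    simp only [Φ1, Φ2]
    set η₁ : ℚ := (((-1:ℤ)^κ : ℤ) : ℚ) with hη₁def
    set η₂ : ℚ := (((-1:ℤ)^lam : ℤ) : ℚ) with hη₂def
    have hη₂v : η₂ = -1 := by rw [hη₂def, hε2]; norm_num
    have hη₁sq : η₁ * η₁ = 1 := by
      rcases hε1 with h | h <;> rw [hη₁def, h] <;> norm_num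
    have hη₁ne : η₁ ≠ 0 := by
      intro h0; rw [h0, zero_mul] at hη₁sq; norm_num at hη₁sq
    have hη₂ne : η₂ ≠ 0 := by rw [hη₂v]; norm_num
    have h2pow : η₁ ^ (2:ℤ) = 1 := by
      rw [show (2:ℤ) = 1 + 1 from rfl, zpow_add₀ hη₁ne, zpow_one, hη₁sq]
    have P1 : (∏ i, η₁ ^ (sv p + 1 - p.1.2 i)) * (∏ i, η₁ ^ (p.1.2 i)) = 1 := by
      rw [← Finset.prod_mul_distrib]
      apply Finset.prod_eq_one
      intro i _
      rw [← zpow_add₀ hη₁ne,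
        show sv p + 1 - p.1.2 i + p.1.2 i = 2*(w+1) from by omega, zpow_mul, h2pow, one_zpow]
    have S1 : (∏ i, η₁ ^ (p.1.2 i)) * (∏ i, η₁ ^ (p.1.2 i)) = 1 := by
      rw [← Finset.prod_mul_distrib]
      apply Finset.prod_eq_one
      intro i _
      rw [← zpow_add₀ hη₁ne, show p.1.2 i + p.1.2 i = 2*(p.1.2 i) from by ring,
        zpow_mul, h2pow, one_zpow]
    have hm1 : η₂ ^ (2:ℤ) = 1 := by
      rw [show (2:ℤ) = 1 + 1 from rfl, zpow_add₀ hη₂ne, zpow_one, hη₂v]; norm_num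
    have P2 : (∏ j, η₂ ^ (sv p - p.2 j)) * (∏ j, η₂ ^ (p.2 j)) = -1 := by
      rw [← Finset.prod_mul_distrib]
      have hterm : ∀ j : Fin B', η₂ ^ (sv p - p.2 j) * η₂ ^ (p.2 j) = -1 := by
        intro j
        rw [← zpow_add₀ hη₂ne, show sv p - p.2 j + p.2 j = 2*w + 1 from by omega,
          zpow_add₀ hη₂ne, zpow_mul, hm1, one_zpow, zpow_one, hη₂v, one_mul]
      rw [Finset.prod_congr rfl fun j _ => hterm j, Finset.prod_const, Finset.card_univ,
        Fintype.card_fin]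
      have hBodd : Odd B' := by rw [← Int.odd_coe_nat, hB]; exact ⟨m, by ring⟩
      exact hBodd.neg_one_pow
    have S2 : (∏ j, η₂ ^ (p.2 j)) * (∏ j, η₂ ^ (p.2 j)) = 1 := by
      rw [← Finset.prod_mul_distrib]
      apply Finset.prod_eq_one
      intro j _
      rw [← zpow_add₀ hη₂ne, show p.2 j + p.2 j = 2*(p.2 j) from by ring,
        zpow_mul, hm1, one_zpow]
    set a : ℚ := ∏ i, η₁ ^ (p.1.2 i)
    set b : ℚ := ∏ j, η₂ ^ (p.2 j)
    set a' : ℚ := ∏ i, η₁ ^ (sv p + 1 - p.1.2 i)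
    set b' : ℚ := ∏ j, η₂ ^ (sv p - p.2 j)
    have ha' : a' = a := by
      calc a' = a' * (a * a) := by rw [S1, mul_one]
        _ = (a' * a) * a := by ring
        _ = a := by rw [P1, one_mul]
    have hb' : b' = -b := by
      calc b' = b' * (b * b) := by rw [S2, mul_one]
        _ = (b' * b) * b := by ring
        _ = -b := by rw [P2]; ring
    rw [ha', hb']; ring
  · -- no fixed points
    intro p hp _ heq
    have := congrArg (fun q : (PUnit × (Fin A' → ℤ)) × (Fin B' → ℤ) => q.2 ⟨0, hB'pos⟩) heq
    simp only [Φ2] at this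
    obtain ⟨w, hw⟩ := hodd p hp
    omega
  · -- membership
    intro p hp
    exact hmemΦ p hp
  · -- involution
    intro p hp
    have h2 := hsvΦ p hp
    refine Prod.ext (Prod.ext ?_ ?_) ?_
    · exact Subsingleton.elim _ _
    · rw [Φ1]
      funext i
      rw [h2]
      simp only [Φ1]
      ring
    · rw [Φ2]
      funext j
      rw [h2]
      simp only [Φ2]
      ring

end ThetaVanish
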